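/- For normalized pure states |ψ₁⟩, |ψ₂⟩ in a finite-dimensional complex Hilbert space and a real number p ≥ 0, the trace norm satisfies ‖p|ψ₁⟩⟨ψ₁| − |ψ₂⟩⟨ψ₂|‖₁ = √((p+1)² − 4p|⟨ψ₁|ψ₂⟩|²). -/

import Mathlib

open Matrix ComplexOrder

/-- Trace norm ‖M‖₁ = Tr √(MᴴM). -/
noncomputable def traceNorm {n : Type*} [Fintype n] [DecidableEq n] (M : Matrix n n ℂ) : ℝ :=
  (((Matrix.posSemidef_conjTranspose_mul_self M).1.eigenvectorUnitary : Matrix n n ℂ) *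
    Matrix.diagonal (((↑) : ℝ → ℂ) ∘ (√·) ∘ (Matrix.posSemidef_conjTranspose_mul_self M).1.eigenvalues) *
    (star (Matrix.posSemidef_conjTranspose_mul_self M).1.eigenvectorUnitary : Matrix n n ℂ)).trace.re

/-- Rank-one projection |ψ⟩⟨ψ| as a matrix. -/
noncomputable def proj {n : Type*} (ψ : n → ℂ) : Matrix n n ℂ :=
  Matrix.vecMulVec ψ (star ψ)

private lemma vmv_mul {n : Type*} [Fintype n] (a b c d : n → ℂ) :
    vecMulVec a b * vecMulVec c d = (b ⬝ᵥ c) • vecMulVec a d := by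
  ext i j
  simp [vecMulVec_apply, mul_apply, dotProduct, Finset.sum_mul, Finset.mul_sum]
  congr 1; ext k; ring

private lemma trace_vmv {n : Type*} [Fintype n] (a b : n → ℂ) :
    (vecMulVec a b).trace = a ⬝ᵥ b := by
  simp [Matrix.trace, vecMulVec_apply, dotProduct, Matrix.diag]

private lemma norm_dot {n : Type*} [Fintype n] (ψ : n → ℂ) (h : ∑ i, ‖ψ i‖ ^ 2 = 1) :
    star ψ ⬝ᵥ ψ = 1 := by
  have h2 : star ψ ⬝ᵥ ψ = ((∑ i, ‖ψ i‖ ^ 2 : ℝ) : ℂ) := by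
    push_cast
    simp only [dotProduct, Pi.star_apply]
    congr 1; ext i
    rw [mul_comm, show (star (ψ i)) = (starRingEnd ℂ) (ψ i) from rfl, Complex.mul_conj']
  rw [h2, h, Complex.ofReal_one]

private theorem abs_eq_aux (s q d : ℝ) (hq : 0 ≤ q) (hd : d = Real.sqrt (s^2+4*q)) (hdpos : 0 < d)
    (μ : ℝ) (h3 : μ^3 = s*μ^2 + q*μ) : |μ| = (2*μ^2 - s*μ)/d := by
  have hd2 : d^2 = s^2 + 4*q := by rw [hd, Real.sq_sqrt]; nlinarith
  rcases eq_or_ne μ 0 with h | h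
  · simp [h]
  · have h2 : μ^2 = s*μ + q := by
      have h4 : (μ^2 - (s*μ + q)) * μ = 0 := by ring_nf; ring_nf at h3; linarith
      rcases mul_eq_zero.1 h4 with h5 | h5
      · linarith
      · exact absurd h5 h
    have hsq : (2*μ - s)^2 = d^2 := by nlinarith
    have hds : -s ≤ d := by nlinarith
    have hds2 : s ≤ d := by nlinarith
    have habs : |2*μ - s| = d := by
      rw [← Real.sqrt_sq_eq_abs, hsq, Real.sqrt_sq hdpos.le]
    rcases (abs_eq hdpos.le).1 habs with hc | hc
    · have hmu : 0 ≤ μ := by linarith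
      rw [abs_of_nonneg hmu]; field_simp; nlinarith
    · have hmu : μ ≤ 0 := by linarith
      rw [abs_of_nonpos hmu]; field_simp; nlinarith


private lemma endgame {n : Type*} [Fintype n] (f : n → ℝ) (p t : ℝ) (hp : 0 ≤ p) (hct : t ≤ 1)
    (h3 : ∀ i, f i ^ 3 = (p - 1) * f i ^ 2 + (p * (1 - t)) * f i)
    (h1 : ∑ i, f i = p - 1) (h2 : ∑ i, f i ^ 2 = p ^ 2 + 1 - 2 * p * t) :
    ∑ i, |f i| = Real.sqrt ((p + 1) ^ 2 - 4 * p * t) := by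
  have hq : 0 ≤ p * (1 - t) := mul_nonneg hp (by linarith)
  have harg : (p + 1) ^ 2 - 4 * p * t = (p - 1) ^ 2 + 4 * (p * (1 - t)) := by ring
  rw [harg]
  have hd0 : (0:ℝ) ≤ (p - 1) ^ 2 + 4 * (p * (1 - t)) := by positivity
  rcases eq_or_lt_of_le (Real.sqrt_nonneg ((p - 1) ^ 2 + 4 * (p * (1 - t)))) with hd | hd
  · have h0 : (p - 1) ^ 2 + 4 * (p * (1 - t)) = 0 := by
      have h'' := Real.sq_sqrt hd0
      rw [← hd] at h''
      nlinarith
    have hs20 : (p - 1) ^ 2 = 0 := by nlinarith [sq_nonneg (p - 1)]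
    have hs0 : p - 1 = 0 := pow_eq_zero_iff (n := 2) (by norm_num) |>.mp hs20
    have hq0 : p * (1 - t) = 0 := by linarith
    have hz : ∀ i, f i = 0 := by
      intro i
      have hi := h3 i
      rw [hs0, hq0] at hi
      simp at hi
      exact hi
    rw [← hd]
    simp [hz]
  · have hpt : ∀ i ∈ Finset.univ, |f i| =
        (2 * f i ^ 2 - (p - 1) * f i) / Real.sqrt ((p - 1) ^ 2 + 4 * (p * (1 - t))) := by
      intro i _
      refine abs_eq_aux (p - 1) (p * (1 - t)) _ hq rfl hd (f i) ?_
      linarith [h3 i]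
    rw [Finset.sum_congr rfl hpt, ← Finset.sum_div]
    have hsplit : ∑ i, (2 * f i ^ 2 - (p - 1) * f i)
        = 2 * (∑ i, f i ^ 2) - (p - 1) * (∑ i, f i) := by
      rw [Finset.sum_sub_distrib, ← Finset.mul_sum, ← Finset.mul_sum]
    rw [hsplit, h2, h1]
    have hdd := Real.mul_self_sqrt hd0
    rw [div_eq_iff hd.ne']
    nlinarith [hdd]

open scoped MatrixOrder in
private lemma sqrt_expr_eq {n : Type*} [Fintype n] [DecidableEq n] (M T : Matrix n n ℂ)
    (hT : T.PosSemidef) (hTsq : T ^ 2 = Mᴴ * M) :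
    (((Matrix.posSemidef_conjTranspose_mul_self M).1.eigenvectorUnitary : Matrix n n ℂ) *
      Matrix.diagonal (((↑) : ℝ → ℂ) ∘ (√·) ∘ (Matrix.posSemidef_conjTranspose_mul_self M).1.eigenvalues) *
      (star (Matrix.posSemidef_conjTranspose_mul_self M).1.eigenvectorUnitary : Matrix n n ℂ)) = T := by
  have h0 : CFC.sqrt (Mᴴ * M) = T :=
    CFC.sqrt_unique (by rw [← pow_two]; exact hTsq) hT.nonneg
  rw [← h0, CFC.sqrt_eq_real_sqrt _ (posSemidef_conjTranspose_mul_self M).nonneg,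
    cfcₙ_eq_cfc (hf := Real.continuous_sqrt.continuousOn) (hf0 := Real.sqrt_zero),
    (posSemidef_conjTranspose_mul_self M).1.cfc_eq]
  rfl

/-- For normalized pure states and p ≥ 0,
‖p|ψ₁⟩⟨ψ₁| − |ψ₂⟩⟨ψ₂|‖₁ = √((p+1)² − 4p|⟨ψ₁|ψ₂⟩|²). -/
theorem stmt0 {n : Type*} [Fintype n] [DecidableEq n] (ψ₁ ψ₂ : n → ℂ)
    (h₁ : ∑ i, ‖ψ₁ i‖ ^ 2 = 1) (h₂ : ∑ i, ‖ψ₂ i‖ ^ 2 = 1) (p : ℝ) (hp : 0 ≤ p) :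
    traceNorm ((p : ℂ) • proj ψ₁ - proj ψ₂) =
      Real.sqrt ((p + 1) ^ 2 - 4 * p * ‖∑ i, star (ψ₁ i) * ψ₂ i‖ ^ 2) := by
  classical
  set c : ℂ := ∑ i, star (ψ₁ i) * ψ₂ i with hcdef
  set t : ℝ := ‖c‖ ^ 2 with htdef
  set A : Matrix n n ℂ := vecMulVec ψ₁ (star ψ₁) with hAdef
  set B : Matrix n n ℂ := vecMulVec ψ₂ (star ψ₂) with hBdef
  set R : Matrix n n ℂ := vecMulVec ψ₁ (star ψ₂) with hRdef
  set R' : Matrix n n ℂ := vecMulVec ψ₂ (star ψ₁) with hR'def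
  have hproj1 : proj ψ₁ = A := rfl
  have hproj2 : proj ψ₂ = B := rfl
  set M : Matrix n n ℂ := (p : ℂ) • A - B with hMdef
  -- dot product facts
  have d11 : star ψ₁ ⬝ᵥ ψ₁ = 1 := norm_dot ψ₁ h₁
  have d22 : star ψ₂ ⬝ᵥ ψ₂ = 1 := norm_dot ψ₂ h₂
  have d12 : star ψ₁ ⬝ᵥ ψ₂ = c := rfl
  have d21 : star ψ₂ ⬝ᵥ ψ₁ = starRingEnd ℂ c := by
    rw [hcdef, _root_.map_sum]
    simp only [dotProduct, Pi.star_apply, _root_.map_mul]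
    congr 1; ext i
    simp [mul_comm]
  have htC : (t : ℂ) = starRingEnd ℂ c * c := by
    rw [htdef]
    push_cast
    rw [mul_comm, ← Complex.mul_conj']
  -- product facts
  have hAA : A * A = A := by rw [hAdef, vmv_mul, d11, one_smul]
  have hBB : B * B = B := by rw [hBdef, vmv_mul, d22, one_smul]
  have hAB : A * B = c • R := by rw [hAdef, hBdef, vmv_mul, d12, hRdef]
  have hBA : B * A = starRingEnd ℂ c • R' := by rw [hAdef, hBdef, vmv_mul, d21, hR'def]
  have hAR : A * R = R := by rw [hAdef, hRdef, vmv_mul, d11, one_smul]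
  have hAR' : A * R' = c • A := by rw [hAdef, hR'def, vmv_mul, d12]
  have hBR : B * R = starRingEnd ℂ c • B := by rw [hBdef, hRdef, vmv_mul, d21]
  have hBR' : B * R' = R' := by rw [hBdef, hR'def, vmv_mul, d22, one_smul]
  -- algebraic expansions
  have hM2 : M * M = ((p:ℂ)^2) • A + B - ((p:ℂ)*c) • R - ((p:ℂ) * starRingEnd ℂ c) • R' := by
    rw [hMdef]
    simp only [sub_mul, mul_sub, smul_mul_assoc, mul_smul_comm, hAA, hAB, hBA, hBB]
    module
  have hM3 : M * (M * M) = ((p:ℂ)-1) • (M*M) + ((p:ℂ)*(1-(t:ℂ))) • M := by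
    rw [htC, hM2, hMdef]
    simp only [sub_mul, mul_sub, add_mul, mul_add, smul_mul_assoc, mul_smul_comm,
      hAA, hAB, hBA, hBB, hAR, hAR', hBR, hBR', smul_smul]
    module
  -- trace facts
  have trA : A.trace = 1 := by
    rw [hAdef, trace_vmv]
    rw [show ψ₁ ⬝ᵥ star ψ₁ = star ψ₁ ⬝ᵥ ψ₁ from by simp [dotProduct, mul_comm], d11]
  have trB : B.trace = 1 := by
    rw [hBdef, trace_vmv]
    rw [show ψ₂ ⬝ᵥ star ψ₂ = star ψ₂ ⬝ᵥ ψ₂ from by simp [dotProduct, mul_comm], d22]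
  have trR : R.trace = starRingEnd ℂ c := by
    rw [hRdef, trace_vmv, ← d21]; simp [dotProduct, mul_comm]
  have trR' : R'.trace = c := by
    rw [hR'def, trace_vmv, ← d12]; simp [dotProduct, mul_comm]
  have trM : M.trace = (p:ℂ) - 1 := by
    rw [hMdef, trace_sub, trace_smul, trA, trB]; simp
  have trM2 : (M*M).trace = (p:ℂ)^2 + 1 - 2*(p:ℂ)*(t:ℂ) := by
    rw [hM2, trace_sub, trace_sub, trace_add, trace_smul, trace_smul, trace_smul,
      trA, trB, trR, trR', htC]
    simp only [smul_eq_mul]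
    ring
  -- Hermitian
  have hM : M.IsHermitian := by
    show Mᴴ = M
    rw [hMdef, conjTranspose_sub, conjTranspose_smul]
    congr 1
    · congr 1
      · exact Complex.conj_ofReal p
      · ext i j
        simp [hAdef, conjTranspose_apply, vecMulVec_apply, mul_comm]
    · ext i j
      simp [hBdef, conjTranspose_apply, vecMulVec_apply, mul_comm]
  set e : n → ℝ := hM.eigenvalues with hedef
  set U : Matrix n n ℂ := (Matrix.IsHermitian.eigenvectorUnitary hM : Matrix n n ℂ) with hUdef
  have hU1 : U * star U = 1 :=
    (Matrix.mem_unitaryGroup_iff).mp (Matrix.IsHermitian.eigenvectorUnitary hM).2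
  have hU2 : star U * U = 1 :=
    (Matrix.mem_unitaryGroup_iff').mp (Matrix.IsHermitian.eigenvectorUnitary hM).2
  have hsp : M = U * diagonal (fun i => (e i : ℂ)) * star U := hM.spectral_theorem
  have hconj : ∀ v w : n → ℂ, (U * diagonal v * star U) * (U * diagonal w * star U)
      = U * diagonal (fun i => v i * w i) * star U := by
    intro v w
    simp only [Matrix.mul_assoc]
    rw [show star U * (U * (diagonal w * star U)) = diagonal w * star U from by
      rw [← Matrix.mul_assoc, hU2, Matrix.one_mul]]
    rw [show diagonal v * (diagonal w * star U) = diagonal (fun i => v i * w i) * star U from by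
      rw [← Matrix.mul_assoc, diagonal_mul_diagonal]]
  have hcanc : ∀ X Y : Matrix n n ℂ, U * X * star U = U * Y * star U → X = Y := by
    intro X Y h
    calc X = 1 * X * 1 := by rw [Matrix.one_mul, Matrix.mul_one]
      _ = (star U * U) * X * (star U * U) := by rw [hU2]
      _ = star U * (U * X * star U) * U := by simp only [Matrix.mul_assoc]
      _ = star U * (U * Y * star U) * U := by rw [h]
      _ = (star U * U) * Y * (star U * U) := by simp only [Matrix.mul_assoc]
      _ = Y := by rw [hU2, Matrix.one_mul, Matrix.mul_one]
  have hM2sp : M * M = U * diagonal (fun i => (e i : ℂ) * (e i : ℂ)) * star U := by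
    rw [hsp, hconj]
  have hM3sp : M * (M * M) =
      U * diagonal (fun i => (e i : ℂ) * ((e i : ℂ) * (e i : ℂ))) * star U := by
    rw [hsp, hconj, hconj]
  -- eigenvalue cubic identity
  have heigC : ∀ i, (e i : ℂ) * ((e i : ℂ) * (e i : ℂ)) =
      ((p:ℂ)-1) * ((e i : ℂ) * (e i : ℂ)) + ((p:ℂ)*(1-(t:ℂ))) * (e i : ℂ) := by
    intro i
    have hsmul : ∀ (a : ℂ) (v : n → ℂ),
        a • (U * diagonal v * star U) = U * diagonal (fun i => a * v i) * star U := by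
      intro a v
      rw [← smul_mul_assoc, ← mul_smul_comm, ← diagonal_smul]
      rfl
    have hadd : ∀ v w : n → ℂ,
        U * diagonal v * star U + U * diagonal w * star U
          = U * diagonal (fun i => v i + w i) * star U := by
      intro v w
      rw [← Matrix.add_mul, ← Matrix.mul_add, ← diagonal_add]
    have h := hM3
    rw [hM3sp, hM2sp, hsp] at h
    rw [hsmul, hsmul, hadd] at h
    have h2 := hcanc _ _ h
    have h3 := congrFun (congrFun h2 i) i
    simpa [diagonal_apply_eq, smul_eq_mul] using h3
  -- real eigenvalue cubic
  have heigR : ∀ i, (e i)^3 = (p-1)*(e i)^2 + (p*(1-t))*(e i) := by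
    intro i
    have h := heigC i
    have h2 : (((e i)^3 : ℝ) : ℂ) = (((p-1)*(e i)^2 + (p*(1-t))*(e i) : ℝ) : ℂ) := by
      push_cast
      linear_combination h
    exact_mod_cast h2
  -- trace via conjugation
  have trace_conj : ∀ v : n → ℂ, (U * diagonal v * star U).trace = ∑ i, v i := by
    intro v
    rw [trace_mul_comm (U * diagonal v) (star U), ← Matrix.mul_assoc, hU2, Matrix.one_mul,
      trace_diagonal]
  have hsum1 : ∑ i, e i = p - 1 := by
    have h : ∑ i, (e i : ℂ) = (p:ℂ) - 1 := by rw [← trace_conj, ← hsp, trM]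
    exact_mod_cast h
  have hsum2 : ∑ i, (e i)^2 = p^2 + 1 - 2*p*t := by
    have h : ∑ i, ((e i : ℂ) * (e i : ℂ)) = (p:ℂ)^2 + 1 - 2*(p:ℂ)*(t:ℂ) := by
      rw [← trace_conj, ← hM2sp, trM2]
    have h' : ∑ i, ((e i : ℂ))^2 = (p:ℂ)^2 + 1 - 2*(p:ℂ)*(t:ℂ) := by
      simpa [pow_two] using h
    have h2 : ∑ i, (((e i)^2 : ℝ) : ℂ) = (((p^2 + 1 - 2*p*t : ℝ)) : ℂ) := by
      push_cast
      exact h'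
    exact_mod_cast h2
  -- the positive square root
  set T : Matrix n n ℂ := U * diagonal (fun i => ((|e i| : ℝ) : ℂ)) * star U with hTdef
  have hTpsd : T.PosSemidef := by
    have hdiag : (diagonal (fun i => ((|e i| : ℝ) : ℂ))).PosSemidef :=
      posSemidef_diagonal_iff.mpr (fun i => by
        rw [Complex.zero_le_real]
        exact abs_nonneg _)
    have h := hdiag.mul_mul_conjTranspose_same U
    rw [hTdef]
    rw [show star U = Uᴴ from rfl]
    exact h
  have hTsq : T ^ 2 = Mᴴ * M := by
    rw [pow_two, hTdef, hconj, hM, hM2sp]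
    have habs2 : (fun i => ((|e i| : ℝ) : ℂ) * ((|e i| : ℝ) : ℂ))
        = (fun i => ((e i : ℝ) : ℂ) * ((e i : ℝ) : ℂ)) := by
      funext i
      norm_cast
      exact abs_mul_abs_self _
    rw [habs2]
  have hTN : traceNorm M = ∑ i, |e i| := by
    have hS := sqrt_expr_eq M T hTpsd hTsq
    rw [traceNorm, hS, hTdef, trace_conj]
    rw [show ∑ i, ((|e i| : ℝ) : ℂ) = ((∑ i, |e i| : ℝ) : ℂ) from by push_cast; rfl,
      Complex.ofReal_re]
  -- Cauchy-Schwarz: t ≤ 1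
  have hct : t ≤ 1 := by
    have hx : ‖(WithLp.equiv 2 (n → ℂ)).symm ψ₁‖ = 1 := by
      rw [EuclideanSpace.norm_eq]
      simp only [WithLp.equiv_symm_apply, WithLp.ofLp_toLp]
      rw [show ∀ f : n → ℝ, ∑ i, f i ^ 2 = ∑ i, f i ^ 2 from fun f => rfl] at h₁
      rw [show (∑ i, ‖ψ₁ i‖ ^ 2) = (1:ℝ) from h₁, Real.sqrt_one]
    have hy : ‖(WithLp.equiv 2 (n → ℂ)).symm ψ₂‖ = 1 := by
      rw [EuclideanSpace.norm_eq]
      simp only [WithLp.equiv_symm_apply, WithLp.ofLp_toLp]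
      rw [show (∑ i, ‖ψ₂ i‖ ^ 2) = (1:ℝ) from h₂, Real.sqrt_one]
    have hin := norm_inner_le_norm (𝕜 := ℂ)
      ((WithLp.equiv 2 (n → ℂ)).symm ψ₁) ((WithLp.equiv 2 (n → ℂ)).symm ψ₂)
    rw [hx, hy, mul_one] at hin
    have hinner : (inner ℂ ((WithLp.equiv 2 (n → ℂ)).symm ψ₁) ((WithLp.equiv 2 (n → ℂ)).symm ψ₂) : ℂ) = c := by
      rw [PiLp.inner_apply, hcdef]
      congr 1
      ext i
      exact RCLike.inner_apply' _ _
    rw [hinner] at hin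
    have : ‖c‖ ≤ 1 := hin
    rw [htdef]
    nlinarith [norm_nonneg c]
  rw [show (p:ℂ) • proj ψ₁ - proj ψ₂ = M from by rw [hproj1, hproj2, hMdef], hTN]
  exact endgame e p t hp hct heigR hsum1 hsum2
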